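/- If ∑_{i∈B} X_i ≤ ∑_{i∈A} X_i where A is the longest initial segment (in the sorted order ≺) of {X_1,...,X_n} with sum ≤ s and B = {i : X_i ≤ t} with ∑_{i∈B} X_i ≤ s, then B ⊆ A and ∑_{i∈B} X_i + t·(|A| − |B|) ≤ ∑_{i∈A} X_i. -/
import Mathlib


open Set

/-- If `S_B ≤ S_A` where `A` is the greedy maximal initial segment (in the order `≺`)
with sum at most `s` and `B = {i : xᵢ ≤ t}` with `S_B ≤ s`, then `B ⊆ A` and
`S_B + t(|A| − |B|) ≤ S_A`. -/
theorem bruss_robertson_case_B_le_A (n : ℕ) (x : Fin n → ℝ)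
    (hpos : ∀ i, 0 ≤ x i) (s t : ℝ) (hs : 0 < s) (ht : 0 < t)
    (A : Finset (Fin n))
    (hAsum : ∑ i ∈ A, x i ≤ s)
    (hAdc : ∀ i ∈ A, ∀ j : Fin n, (x j < x i ∨ (x j = x i ∧ j < i)) → j ∈ A)
    (hAmax : ∀ A' : Finset (Fin n), ∑ i ∈ A', x i ≤ s → A'.card ≤ A.card)
    (B : Finset (Fin n)) (hB : B = Finset.univ.filter (fun i => x i ≤ t))
    (hBsum : ∑ i ∈ B, x i ≤ s)
    (hBA : ∑ i ∈ B, x i ≤ ∑ i ∈ A, x i) :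
    B ⊆ A ∧ ∑ i ∈ B, x i + t * ((A.card : ℝ) - (B.card : ℝ)) ≤ ∑ i ∈ A, x i := by
  have hBmem : ∀ i, i ∈ B ↔ x i ≤ t := by
    intro i; simp [hB]
  have hsub : B ⊆ A := by
    intro i hiB
    by_contra hiA
    have hAB : A ⊆ B := by
      intro j hjA
      have hji : x j ≤ x i := by
        by_contra h
        push_neg at h
        exact hiA (hAdc j hjA i (Or.inl h))
      exact (hBmem j).2 (hji.trans ((hBmem i).1 hiB))
    have hins : insert i A ⊆ B := Finset.insert_subset hiB hAB
    have hsum' : ∑ k ∈ insert i A, x k ≤ s :=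
      le_trans (Finset.sum_le_sum_of_subset_of_nonneg hins (fun k _ _ => hpos k)) hBsum
    have hc := hAmax (insert i A) hsum'
    rw [Finset.card_insert_of_notMem hiA] at hc
    omega
  refine ⟨hsub, ?_⟩
  have hsplit : ∑ i ∈ B, x i + ∑ i ∈ A \ B, x i = ∑ i ∈ A, x i := by
    rw [add_comm, Finset.sum_sdiff hsub]
  have hcard : (A.card : ℝ) - (B.card : ℝ) = ((A \ B).card : ℝ) := by
    have h := Finset.card_le_card hsub
    rw [Finset.card_sdiff_of_subset hsub]
    push_cast [Nat.cast_sub h]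
    ring
  have hge : t * ((A \ B).card : ℝ) ≤ ∑ i ∈ A \ B, x i := by
    rw [mul_comm]
    have := Finset.card_nsmul_le_sum (A \ B) x t (fun i hi => by
      have : ¬ x i ≤ t := by
        have := (Finset.mem_sdiff.1 hi).2
        intro h; exact this ((hBmem i).2 h)
      linarith [not_le.1 this])
    simpa [nsmul_eq_mul] using this
  rw [hcard]
  linarith
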